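/- (Yoshihara–Heinrich inequality) For any 𝒜⊗ℬ-measurable function h: Ω × Ω → ℝ and any δ > 0, ∫|h| d|P_{𝒜⊗ℬ} − P_𝒜⊗P_ℬ| ≤ 2 · max{ (∫|h|^{1+δ} dP_{𝒜⊗ℬ})^{1/(1+δ)}, (∫|h|^{1+δ} d(P_𝒜⊗P_ℬ))^{1/(1+δ)} } · β(𝒜,ℬ)^{δ/(1+δ)}. -/

import Mathlib

open MeasureTheory ENNReal

lemma sub_univ_le_beta {α : Type*} [MeasurableSpace α] (μ ν : Measure α)
    [IsFiniteMeasure μ] [IsFiniteMeasure ν] {β : ℝ≥0∞}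
    (hβ : ∀ C, MeasurableSet C → (μ C - ν C) ⊔ (ν C - μ C) ≤ β) :
    (μ - ν) Set.univ ≤ β := by
  obtain ⟨s, hs, h1, h2⟩ := hahn_decomposition (μ := μ) (ν := ν)
  have hle : ν.restrict s ≤ μ.restrict s := by
    refine Measure.le_iff.2 fun t ht => ?_
    rw [Measure.restrict_apply ht, Measure.restrict_apply ht]
    exact h1 _ (ht.inter hs) (Set.inter_subset_right)
  have hd : μ - ν ≤ μ.restrict s - ν.restrict s := by
    refine Measure.sub_le_of_le_add (Measure.le_iff.2 fun t ht => ?_)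
    have hsub : (μ.restrict s - ν.restrict s) t = μ (t ∩ s) - ν (t ∩ s) := by
      rw [Measure.sub_apply ht hle, Measure.restrict_apply ht, Measure.restrict_apply ht]
    rw [Measure.add_apply, hsub]
    calc μ t = μ (t ∩ s) + μ (t \ s) := (measure_inter_add_diff t hs).symm
      _ = μ (t ∩ s) + μ (t ∩ sᶜ) := by rw [Set.diff_eq]
      _ ≤ μ (t ∩ s) + ν (t ∩ sᶜ) := by
            refine add_le_add le_rfl ?_
            exact h2 _ (ht.inter hs.compl) Set.inter_subset_right
      _ = (μ (t ∩ s) - ν (t ∩ s)) + ν (t ∩ s) + ν (t ∩ sᶜ) := by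
            rw [tsub_add_cancel_of_le (h1 _ (ht.inter hs) Set.inter_subset_right)]
      _ = (μ (t ∩ s) - ν (t ∩ s)) + ν t := by
            rw [add_assoc, ← measure_inter_add_diff t hs, Set.diff_eq]
  calc (μ - ν) Set.univ ≤ (μ.restrict s - ν.restrict s) Set.univ := hd _
    _ = μ s - ν s := by
        rw [Measure.sub_apply MeasurableSet.univ hle, Measure.restrict_apply MeasurableSet.univ,
          Measure.restrict_apply MeasurableSet.univ, Set.univ_inter]
    _ ≤ (μ s - ν s) ⊔ (ν s - μ s) := le_sup_left
    _ ≤ β := hβ s hs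

lemma key_ineq {α : Type*} [MeasurableSpace α] (μ ν : Measure α)
    [IsFiniteMeasure μ] [IsFiniteMeasure ν] (f : α → ℝ≥0∞) (hf : Measurable f)
    (δ : ℝ) (hδ : 0 < δ) (β : ℝ≥0∞)
    (hβ : ∀ C, MeasurableSet C → (μ C - ν C) ⊔ (ν C - μ C) ≤ β) :
    ∫⁻ x, f x ∂((μ - ν) + (ν - μ)) ≤
      2 * max ((∫⁻ x, f x ^ (1 + δ) ∂μ) ^ (1 / (1 + δ)))
          ((∫⁻ x, f x ^ (1 + δ) ∂ν) ^ (1 / (1 + δ)))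
        * β ^ (δ / (1 + δ)) := by
  set p : ℝ := 1 + δ with hp
  have hp1 : 1 < p := by simp [hp, hδ]
  have hp0 : 0 < p := by linarith
  set q : ℝ := (1 + δ) / δ with hq
  have hpq : p.HolderConjugate q := by
    refine Real.holderConjugate_iff.2 ⟨hp1, ?_⟩
    rw [hp, hq]
    field_simp
  have hq_inv : 1 / q = δ / (1 + δ) := by rw [hq]; field_simp
  set τ : Measure α := (μ - ν) + (ν - μ) with hτ
  set K : ℝ≥0∞ := max ((∫⁻ x, f x ^ p ∂μ) ^ (1 / p)) ((∫⁻ x, f x ^ p ∂ν) ^ (1 / p)) with hK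
  -- Hölder
  have hold : ∫⁻ x, f x ∂τ ≤ (∫⁻ x, f x ^ p ∂τ) ^ (1 / p) * (τ Set.univ) ^ (1 / q) := by
    have := ENNReal.lintegral_mul_le_Lp_mul_Lq τ hpq hf.aemeasurable
      (aemeasurable_const (b := (1 : ℝ≥0∞)))
    simpa using this
  -- bound on ∫ f^p dτ
  have hμν : ∫⁻ x, f x ^ p ∂μ ≤ K ^ p := by
    have : (∫⁻ x, f x ^ p ∂μ) = ((∫⁻ x, f x ^ p ∂μ) ^ (1 / p)) ^ p := by
      rw [← ENNReal.rpow_mul, one_div, inv_mul_cancel₀ hp0.ne', ENNReal.rpow_one]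
    rw [this]
    exact ENNReal.rpow_le_rpow le_sup_left hp0.le
  have hνν : ∫⁻ x, f x ^ p ∂ν ≤ K ^ p := by
    have : (∫⁻ x, f x ^ p ∂ν) = ((∫⁻ x, f x ^ p ∂ν) ^ (1 / p)) ^ p := by
      rw [← ENNReal.rpow_mul, one_div, inv_mul_cancel₀ hp0.ne', ENNReal.rpow_one]
    rw [this]
    exact ENNReal.rpow_le_rpow le_sup_right hp0.le
  have hτp : ∫⁻ x, f x ^ p ∂τ ≤ 2 * K ^ p := by
    rw [hτ, lintegral_add_measure]
    calc (∫⁻ x, f x ^ p ∂(μ - ν)) + ∫⁻ x, f x ^ p ∂(ν - μ)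
        ≤ (∫⁻ x, f x ^ p ∂μ) + ∫⁻ x, f x ^ p ∂ν :=
          add_le_add (lintegral_mono' Measure.sub_le le_rfl)
            (lintegral_mono' Measure.sub_le le_rfl)
      _ ≤ K ^ p + K ^ p := add_le_add hμν hνν
      _ = 2 * K ^ p := (two_mul _).symm
  -- bound on τ univ
  have hτu : τ Set.univ ≤ 2 * β := by
    rw [hτ, Measure.add_apply]
    have h2 : (ν - μ) Set.univ ≤ β := by
      refine sub_univ_le_beta ν μ fun C hC => ?_
      rw [sup_comm]; exact hβ C hC
    calc (μ - ν) Set.univ + (ν - μ) Set.univ ≤ β + β :=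
          add_le_add (sub_univ_le_beta μ ν hβ) h2
      _ = 2 * β := (two_mul _).symm
  calc ∫⁻ x, f x ∂τ ≤ (∫⁻ x, f x ^ p ∂τ) ^ (1 / p) * (τ Set.univ) ^ (1 / q) := hold
    _ ≤ (2 * K ^ p) ^ (1 / p) * (2 * β) ^ (1 / q) := by
        exact mul_le_mul' (ENNReal.rpow_le_rpow hτp (by positivity))
          (ENNReal.rpow_le_rpow hτu (by positivity))
    _ = (2 : ℝ≥0∞) ^ (1 / p) * K * ((2 : ℝ≥0∞) ^ (1 / q) * β ^ (1 / q)) := by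
        rw [ENNReal.mul_rpow_of_nonneg _ _ (by positivity),
          ENNReal.mul_rpow_of_nonneg _ _ (by positivity),
          ← ENNReal.rpow_mul, mul_one_div_cancel hp0.ne', ENNReal.rpow_one]
    _ = 2 * K * β ^ (δ / (1 + δ)) := by
        have h2 : (2 : ℝ≥0∞) ^ (1 / p) * (2 : ℝ≥0∞) ^ (1 / q) = 2 := by
          rw [← ENNReal.rpow_add _ _ (by norm_num) (by norm_num), one_div, one_div,
            hpq.inv_add_inv_eq_one, ENNReal.rpow_one]
        calc (2:ℝ≥0∞) ^ (1/p) * K * ((2:ℝ≥0∞) ^ (1/q) * β ^ (1/q))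
            = ((2:ℝ≥0∞) ^ (1/p) * (2:ℝ≥0∞) ^ (1/q)) * K * β ^ (1/q) := by ring
          _ = 2 * K * β ^ (δ/(1+δ)) := by rw [h2, hq_inv]


/-- The β-mixing (absolute regularity) coefficient of two sub-σ-algebras
`mA, mB` of a probability space `(Ω, m0, P)`: the total-variation-type
supremum, over sets `C` measurable for the product σ-algebra `mA ⊗ mB`, of
the discrepancy between the diagonal pushforward of `P` and the product of
the restrictions of `P` to `mA` and `mB`. -/
noncomputable def betaMix {Ω : Type*} {m0 : MeasurableSpace Ω} (P : Measure Ω)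
    (mA mB : MeasurableSpace Ω) (hA : mA ≤ m0) (hB : mB ≤ m0) : ℝ≥0∞ :=
  ⨆ (C : Set (Ω × Ω)) (_ : MeasurableSet[mA.prod mB] C),
    (P ((fun ω => (ω, ω)) ⁻¹' C)
        - (@Measure.prod Ω Ω mA mB (P.trim hA) (P.trim hB)) C) ⊔
      ((@Measure.prod Ω Ω mA mB (P.trim hA) (P.trim hB)) C
        - P ((fun ω => (ω, ω)) ⁻¹' C))


/-- The diagonal pushforward of `P`, as a measure on `Ω × Ω` equipped with the
product σ-algebra `mA ⊗ mB` of two sub-σ-algebras. -/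
noncomputable def diagMeasure {Ω : Type*} (m0 : MeasurableSpace Ω) (P : Measure Ω)
    (mA mB : MeasurableSpace Ω) : @Measure (Ω × Ω) (mA.prod mB) :=
  @Measure.map Ω (Ω × Ω) m0 (mA.prod mB) (fun ω => (ω, ω)) P

/-- The product of the restrictions (trims) of `P` to two sub-σ-algebras,
as a measure on `Ω × Ω` with the σ-algebra `mA ⊗ mB`. -/
noncomputable def prodTrim {Ω : Type*} {m0 : MeasurableSpace Ω} (P : Measure Ω)
    (mA mB : MeasurableSpace Ω) (hA : mA ≤ m0) (hB : mB ≤ m0) :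
    @Measure (Ω × Ω) (mA.prod mB) :=
  @Measure.prod Ω Ω mA mB (P.trim hA) (P.trim hB)

/-- **Yoshihara–Heinrich inequality.** For any `mA ⊗ mB`-measurable
`h : Ω × Ω → ℝ` and any `δ > 0`,
`∫ |h| d|P_{A⊗B} − P_A ⊗ P_B| ≤ 2 max{‖h‖_{1+δ, P_{A⊗B}}, ‖h‖_{1+δ, P_A⊗P_B}} β(A,B)^{δ/(1+δ)}`,
where the total variation `|μ − ν|` of the difference of the two finite
measures is `(μ - ν) + (ν - μ)` (truncated subtraction of measures). -/
theorem yoshihara_heinrich {Ω : Type*} {m0 : MeasurableSpace Ω} (P : Measure Ω)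
    [IsProbabilityMeasure P]
    (mA mB : MeasurableSpace Ω) (hA : mA ≤ m0) (hB : mB ≤ m0)
    (h : Ω × Ω → ℝ) (hmeas : Measurable[mA.prod mB] h) (δ : ℝ) (hδ : 0 < δ) :
    ∫⁻ x, (‖h x‖₊ : ℝ≥0∞)
        ∂((diagMeasure m0 P mA mB - prodTrim P mA mB hA hB)
            + (prodTrim P mA mB hA hB - diagMeasure m0 P mA mB))
      ≤ 2 *
        max ((∫⁻ x, (‖h x‖₊ : ℝ≥0∞) ^ (1 + δ) ∂(diagMeasure m0 P mA mB))
              ^ (1 / (1 + δ)))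
            ((∫⁻ x, (‖h x‖₊ : ℝ≥0∞) ^ (1 + δ) ∂(prodTrim P mA mB hA hB))
              ^ (1 / (1 + δ)))
        * (betaMix P mA mB hA hB) ^ (δ / (1 + δ)) := by
  have hdiag : @Measurable Ω (Ω × Ω) m0 (mA.prod mB) (fun ω => (ω, ω)) :=
    @Measurable.prodMk Ω m0 Ω Ω mA mB id id (measurable_id'' hA) (measurable_id'' hB)
  haveI hfinA : @IsFiniteMeasure Ω mA (P.trim hA) := isFiniteMeasure_trim hA
  haveI hfinB : @IsFiniteMeasure Ω mB (P.trim hB) := isFiniteMeasure_trim hB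
  haveI finμ : @IsFiniteMeasure (Ω × Ω) (mA.prod mB) (diagMeasure m0 P mA mB) := by
    constructor
    rw [diagMeasure, Measure.map_apply hdiag MeasurableSet.univ]
    exact measure_lt_top P _
  haveI finν : @IsFiniteMeasure (Ω × Ω) (mA.prod mB) (prodTrim P mA mB hA hB) := by
    constructor
    haveI sfinB : @SFinite Ω mB (P.trim hB) := inferInstance
    have hpp := @Measure.prod_prod Ω Ω mA mB (P.trim hA) (P.trim hB) sfinB Set.univ Set.univ
    rw [prodTrim, ← Set.univ_prod_univ, hpp, trim_measurableSet_eq hA MeasurableSet.univ,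
      trim_measurableSet_eq hB MeasurableSet.univ, measure_univ, mul_one]
    exact ENNReal.one_lt_top
  have hf : @Measurable (Ω × Ω) ℝ≥0∞ (mA.prod mB) _ (fun x => (‖h x‖₊ : ℝ≥0∞)) :=
    (measurable_nnnorm.comp hmeas).coe_nnreal_ennreal
  have hβ : ∀ C, MeasurableSet[mA.prod mB] C →
      (diagMeasure m0 P mA mB C - prodTrim P mA mB hA hB C) ⊔
        (prodTrim P mA mB hA hB C - diagMeasure m0 P mA mB C) ≤ betaMix P mA mB hA hB := by
    intro C hC
    have hμC : diagMeasure m0 P mA mB C = P ((fun ω => (ω, ω)) ⁻¹' C) := by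
      rw [diagMeasure, Measure.map_apply hdiag hC]
    rw [hμC, prodTrim, betaMix]
    exact le_iSup₂ (f := fun (C : Set (Ω × Ω)) (_ : MeasurableSet[mA.prod mB] C) =>
      (P ((fun ω => (ω, ω)) ⁻¹' C)
          - (@Measure.prod Ω Ω mA mB (P.trim hA) (P.trim hB)) C) ⊔
        ((@Measure.prod Ω Ω mA mB (P.trim hA) (P.trim hB)) C
          - P ((fun ω => (ω, ω)) ⁻¹' C))) C hC
  exact @key_ineq (Ω × Ω) (mA.prod mB) (diagMeasure m0 P mA mB)
    (prodTrim P mA mB hA hB) finμ finν _ hf δ hδ _ hβ
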